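/- Let A, A_k be self-adjoint operators on a Hilbert space H whose resolvents R^k_ζ = (ζ − A_k)^{-1} converge strongly to R_ζ = (ζ − A)^{-1} for ζ off the real axis, with the operator-norm lower semicontinuity ‖R_ζ‖ ≤ liminf_k ‖R^k_ζ‖. Then for every λ ∈ σ(A) there exist λ_k ∈ σ(A_k) with λ_k → λ (spectral lower semicontinuity: σ(A) ⊆ lim inf σ(A_k)). -/

import Mathlib

open Filter
open scoped Topology

/-- For a selfadjoint operator on a Hilbert space, the norm of the resolvent at `ζ`
is at most the inverse of the distance from `ζ` to the spectrum. -/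
lemma norm_resolvent_le_of_isSelfAdjoint {H : Type*} [NormedAddCommGroup H]
    [InnerProductSpace ℂ H] [CompleteSpace H] {B : H →L[ℂ] H} (hB : IsSelfAdjoint B)
    {ζ : ℂ} (hζ : ζ.im ≠ 0) :
    ‖resolvent B ζ‖ ≤ (Metric.infDist ζ (spectrum ℂ B))⁻¹ := by
  rcases subsingleton_or_nontrivial (H →L[ℂ] H) with hsub | hnt
  · rw [Subsingleton.elim (resolvent B ζ) 0, norm_zero]
    exact inv_nonneg.2 Metric.infDist_nonneg
  set d := Metric.infDist ζ (spectrum ℂ B) with hd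
  have hζs : ζ ∉ spectrum ℂ B := fun h => hζ (by rw [hB.mem_spectrum_eq_re h]; simp)
  have hdpos : 0 < d :=
    ((spectrum.isClosed B).notMem_iff_infDist_pos (spectrum.nonempty B)).mp hζs
  obtain ⟨u, hu⟩ := spectrum.notMem_iff.mp hζs
  have hres : resolvent B ζ = ↑u⁻¹ := by rw [resolvent, ← hu, Ring.inverse_unit]
  -- the resolvent is star-normal
  have hcu : Commute (star (↑u : H →L[ℂ] H)) (↑u : H →L[ℂ] H) := by
    rw [hu, star_sub, hB.star_eq, ← algebraMap_star_comm]
    exact (Algebra.commute_algebraMap_left _ _).sub_left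
      ((Algebra.commute_algebraMap_right _ _).sub_right (Commute.refl B))
  have hcomm : Commute (star (↑u⁻¹ : H →L[ℂ] H)) (↑u⁻¹ : H →L[ℂ] H) := by
    rw [← Ring.inverse_unit, ← Ring.inverse_star]
    exact hcu.ringInverse_ringInverse
  haveI hnorm : IsStarNormal (↑u⁻¹ : H →L[ℂ] H) := ⟨hcomm⟩
  -- every point of the spectrum of the resolvent has norm ≤ d⁻¹
  have hbound : ∀ μ ∈ spectrum ℂ (↑u⁻¹ : H →L[ℂ] H), ‖μ‖ ≤ d⁻¹ := by
    intro μ hμ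
    rw [← spectrum.map_inv] at hμ
    have hν : μ⁻¹ ∈ spectrum ℂ (↑u : H →L[ℂ] H) := Set.mem_inv.mp hμ
    rw [hu, ← spectrum.singleton_sub_eq] at hν
    obtain ⟨z, hz, t, ht, hzt⟩ := hν
    rw [Set.mem_singleton_iff] at hz
    rw [hz] at hzt
    have hdist : d ≤ ‖μ⁻¹‖ := by
      rw [← hzt]
      calc d ≤ dist ζ t := Metric.infDist_le_dist_of_mem ht
        _ = ‖ζ - t‖ := by rw [dist_eq_norm]
    have hμne : μ ≠ 0 := by
      intro h
      rw [h, inv_zero, norm_zero] at hdist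
      exact hdpos.not_ge hdist
    rw [norm_inv] at hdist
    calc ‖μ‖ = (‖μ‖⁻¹)⁻¹ := by rw [inv_inv]
      _ ≤ d⁻¹ := inv_anti₀ hdpos hdist
  -- conclude via the spectral radius
  have hrad := IsStarNormal.spectralRadius_eq_nnnorm (↑u⁻¹ : H →L[ℂ] H)
  have hle : ((‖(↑u⁻¹ : H →L[ℂ] H)‖₊ : ENNReal)) ≤ ((Real.toNNReal d⁻¹ : NNReal) : ENNReal) := by
    rw [← hrad]
    refine iSup₂_le fun μ hμ => ENNReal.coe_le_coe.mpr ?_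
    exact (Real.le_toNNReal_iff_coe_le (inv_nonneg.2 hdpos.le)).mpr (hbound μ hμ)
  rw [ENNReal.coe_le_coe] at hle
  rw [hres]
  calc ‖(↑u⁻¹ : H →L[ℂ] H)‖ ≤ ((Real.toNNReal d⁻¹ : NNReal) : ℝ) := hle
    _ = d⁻¹ := Real.coe_toNNReal _ (inv_nonneg.2 hdpos.le)

/-- In a complex Banach algebra, the inverse norm of the resolvent bounds the
distance from `ζ` to any spectral point. -/
lemma inv_norm_resolvent_le {A : Type*} [NormedRing A] [NormedAlgebra ℂ A]
    [CompleteSpace A] [NormOneClass A] {a : A} {l ζ : ℂ}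
    (hl : l ∈ spectrum ℂ a) (hζ : ζ ∉ spectrum ℂ a) :
    ‖resolvent a ζ‖⁻¹ ≤ dist ζ l := by
  obtain ⟨u, hu⟩ := spectrum.notMem_iff.mp hζ
  have hres : resolvent a ζ = ↑u⁻¹ := by rw [resolvent, ← hu, Ring.inverse_unit]
  by_contra h
  push_neg at h
  refine spectrum.mem_iff.mp hl (Units.isUnit (u.ofNearby (algebraMap ℂ A l - a) ?_))
  rw [hu, ← hres]
  calc ‖algebraMap ℂ A l - a - (algebraMap ℂ A ζ - a)‖
      = ‖algebraMap ℂ A (l - ζ)‖ := by rw [map_sub]; congr 1; abel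
    _ = ‖l - ζ‖ := norm_algebraMap' A (l - ζ)
    _ = dist ζ l := by rw [← dist_eq_norm, dist_comm]
    _ < _ := h


/-- if the resolvents of self-adjoint operators `A k` converge
strongly off the real axis to those of `A`, with the operator-norm lower
semicontinuity `‖R_ζ‖ ≤ liminf ‖R^k_ζ‖`, then every spectral point of `A` is a
limit of spectral points of the `A k` (spectral lower semicontinuity). -/
theorem spectrum_lower_semicontinuous_of_resolvent_convergence
    (H : Type*) [NormedAddCommGroup H] [InnerProductSpace ℂ H] [CompleteSpace H]
    (A : ℕ → H →L[ℂ] H) (Ainf : H →L[ℂ] H)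
    (hA : ∀ k, IsSelfAdjoint (A k)) (hAinf : IsSelfAdjoint Ainf)
    (hstrong : ∀ ζ : ℂ, ζ.im ≠ 0 → ∀ u : H,
      Tendsto (fun k => resolvent (A k) ζ u) atTop (𝓝 (resolvent Ainf ζ u)))
    (hlsc : ∀ ζ : ℂ, ζ.im ≠ 0 →
      ‖resolvent Ainf ζ‖ ≤ liminf (fun k => ‖resolvent (A k) ζ‖) atTop) :
    ∀ l ∈ spectrum ℂ Ainf, ∃ lam : ℕ → ℂ,
      (∀ k, lam k ∈ spectrum ℂ (A k)) ∧ Tendsto lam atTop (𝓝 l) := by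
  intro l hl
  rcases subsingleton_or_nontrivial H with hsub | hnt
  · exact absurd (spectrum.mem_iff.mp hl) (not_not.mpr (isUnit_of_subsingleton _))
  obtain ⟨x, hx⟩ := exists_ne (0 : H)
  haveI : Nontrivial (H →L[ℂ] H) :=
    ⟨1, 0, fun h => hx (by simpa using DFunLike.congr_fun h x)⟩
  have him : l.im = 0 := by rw [hAinf.mem_spectrum_eq_re hl]; simp
  have key : ∀ ε : ℝ, 0 < ε → ∀ᶠ k in atTop,
      Metric.infDist l (spectrum ℂ (A k)) < 3 * ε := by
    intro ε hε
    set ζ : ℂ := l + ε * Complex.I with hζdef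
    have hζim : ζ.im ≠ 0 := by
      simp only [hζdef, Complex.add_im, Complex.mul_im, Complex.I_im, Complex.I_re,
        Complex.ofReal_re, Complex.ofReal_im, him]
      simpa using hε.ne'
    have hζl : dist ζ l = ε := by
      rw [dist_eq_norm]
      simp [hζdef, abs_of_pos hε]
    have hζAinf : ζ ∉ spectrum ℂ Ainf := fun h => hζim (by rw [hAinf.mem_spectrum_eq_re h]; simp)
    -- lower bound for the limiting resolvent norm
    have hRpos : 0 < ‖resolvent Ainf ζ‖ := by
      obtain ⟨u, hu⟩ := spectrum.notMem_iff.mp hζAinf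
      rw [resolvent, ← hu, Ring.inverse_unit]
      refine norm_pos_iff.mpr fun h0 => one_ne_zero (α := H →L[ℂ] H) ?_
      rw [← u.inv_mul, h0, zero_mul]
    have h1 : ε⁻¹ ≤ ‖resolvent Ainf ζ‖ := by
      have h2 := inv_norm_resolvent_le hl hζAinf
      rw [hζl] at h2
      exact (inv_le_comm₀ hRpos hε).mp h2
    have h3 : ((2 * ε)⁻¹ : ℝ) < liminf (fun k => ‖resolvent (A k) ζ‖) atTop := by
      refine lt_of_lt_of_le ?_ (h1.trans (hlsc ζ hζim))
      rw [inv_lt_inv₀ (by positivity) hε]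
      linarith
    have h4 : ∀ᶠ k in atTop, (2 * ε)⁻¹ < ‖resolvent (A k) ζ‖ :=
      eventually_lt_of_lt_liminf h3
        (Filter.isBoundedUnder_of ⟨0, fun k => norm_nonneg _⟩)
    filter_upwards [h4] with k hk
    have hζAk : ζ ∉ spectrum ℂ (A k) := fun h => hζim (by rw [(hA k).mem_spectrum_eq_re h]; simp)
    have hdk : 0 < Metric.infDist ζ (spectrum ℂ (A k)) :=
      ((spectrum.isClosed (A k)).notMem_iff_infDist_pos (spectrum.nonempty (A k))).mp hζAk
    have h5 := norm_resolvent_le_of_isSelfAdjoint (hA k) hζim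
    have h6 : Metric.infDist ζ (spectrum ℂ (A k)) < 2 * ε := by
      have h7 := hk.trans_le h5
      rwa [inv_lt_inv₀ (by positivity) hdk] at h7
    calc Metric.infDist l (spectrum ℂ (A k))
        ≤ Metric.infDist ζ (spectrum ℂ (A k)) + dist l ζ :=
          Metric.infDist_le_infDist_add_dist
      _ < 2 * ε + ε := by rw [dist_comm, hζl]; linarith
      _ = 3 * ε := by ring
  have hD : Tendsto (fun k => Metric.infDist l (spectrum ℂ (A k))) atTop (𝓝 0) := by
    rw [NormedAddCommGroup.tendsto_nhds_zero]
    intro ε hε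
    filter_upwards [key (ε / 4) (by linarith)] with k hk
    rw [Real.norm_eq_abs, abs_of_nonneg Metric.infDist_nonneg]
    linarith
  have hc : ∀ k, ∃ μ ∈ spectrum ℂ (A k), Metric.infDist l (spectrum ℂ (A k)) = dist l μ :=
    fun k => (spectrum.isCompact (A k)).exists_infDist_eq_dist (spectrum.nonempty (A k)) l
  choose lam hmem hdist using hc
  refine ⟨lam, hmem, ?_⟩
  rw [tendsto_iff_dist_tendsto_zero]
  have heq : (fun k => dist (lam k) l) = fun k => Metric.infDist l (spectrum ℂ (A k)) :=
    funext fun k => by rw [dist_comm, ← hdist k]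
  rw [heq]
  exact hD
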